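/- If G is a bipartite graph with bipartition V = L ⊔ R and minimum degree at least 2, then F(G) ≥ max{|L|, |R|}. -/

import Mathlib

open SimpleGraph

variable {V : Type*}

/-- Closure of the filled set `S` under the zero forcing color change rule:
a filled vertex with exactly one unfilled neighbor fills that neighbor. -/
inductive ZFDerived (G : SimpleGraph V) (S : Set V) : V → Prop
  | init {v : V} : v ∈ S → ZFDerived G S v
  | force {v w : V} : ZFDerived G S v → G.Adj v w →
      (∀ u, G.Adj v u → u ≠ w → ZFDerived G S u) → ZFDerived G S w

/-- The derived set of `S`. -/
def ZFDerivedSet (G : SimpleGraph V) (S : Set V) : Set V := {v | ZFDerived G S v}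

/-- `S` is a zero forcing set if its derived set is all of `V`. -/
def IsZeroForcing (G : SimpleGraph V) (S : Set V) : Prop :=
  ZFDerivedSet G S = Set.univ

/-- `S` is a failed zero forcing set if its derived set is not all of `V`. -/
def IsFailed (G : SimpleGraph V) (S : Set V) : Prop :=
  ZFDerivedSet G S ≠ Set.univ

/-- The failed zero forcing number `F(G)`: the maximum size of a failed zero forcing set. -/
noncomputable def failedZF (G : SimpleGraph V) : ℕ :=
  sSup {k | ∃ S : Finset V, IsFailed G ↑S ∧ S.card = k}

/-- The zero forcing number `Z(G)`: the minimum size of a zero forcing set. -/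
noncomputable def zfNum (G : SimpleGraph V) : ℕ :=
  sInf {k | ∃ S : Finset V, IsZeroForcing G ↑S ∧ S.card = k}


lemma zf_derived_subset_part {V : Type*} [Fintype V] (G : SimpleGraph V)
    (P Q : Finset V) (hP : ∀ a b, G.Adj a b → a ∈ P → b ∈ Q)
    (hPQ : ∀ x, x ∈ P → x ∉ Q)
    (hδ : ∀ v, 2 ≤ (G.neighborSet v).ncard) :
    ∀ w, ZFDerived G (↑P) w → w ∈ P := by
  intro w h
  induction h with
  | init h => exact h
  | @force v w hv hadj hall ihv ihall =>
    exfalso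
    -- v has at least two neighbors, so one neighbor u ≠ w
    have hsub : ¬ (G.neighborSet v ⊆ {w}) := by
      intro hs
      have := Set.ncard_le_ncard hs (Set.finite_singleton w)
      rw [Set.ncard_singleton] at this
      have h2 := hδ v
      omega
    obtain ⟨u, hu, hne⟩ : ∃ u, G.Adj v u ∧ u ≠ w := by
      by_contra hc
      push_neg at hc
      exact hsub (fun u hu => hc u hu)
    have huP : u ∈ P := ihall u hu hne
    have huQ : u ∈ Q := hP v u hu ihv
    exact hPQ u huP huQ

lemma failedZF_part {V : Type*} [Fintype V] (G : SimpleGraph V)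
    (P Q : Finset V) (hP : ∀ a b, G.Adj a b → a ∈ P → b ∈ Q)
    (hPQ : ∀ x, x ∈ P → x ∉ Q) (hQ : Q.Nonempty)
    (hδ : ∀ v, 2 ≤ (G.neighborSet v).ncard) :
    P.card ≤ failedZF G := by
  obtain ⟨q, hq⟩ := hQ
  have hfail : IsFailed G (↑P : Set V) := by
    intro h
    have : ZFDerived G (↑P) q := by
      have : q ∈ ZFDerivedSet G (↑P) := h ▸ Set.mem_univ q
      exact this
    exact hPQ q (zf_derived_subset_part G P Q hP hPQ hδ q this) hq
  have hbdd : BddAbove {k | ∃ S : Finset V, IsFailed G ↑S ∧ S.card = k} := by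
    refine ⟨Fintype.card V, fun k hk => ?_⟩
    obtain ⟨S, _, rfl⟩ := hk
    exact S.card_le_univ
  exact le_csSup hbdd ⟨P, hfail, rfl⟩

theorem failedZF_ge_of_bipartite {V : Type*} [Fintype V] [DecidableEq V]
    (G : SimpleGraph V) (L R : Finset V)
    (hunion : (↑L ∪ ↑R : Set V) = Set.univ) (hdisj : Disjoint L R)
    (hbip : ∀ a b, G.Adj a b → (a ∈ L ∧ b ∈ R) ∨ (a ∈ R ∧ b ∈ L))
    (hδ : ∀ v, 2 ≤ (G.neighborSet v).ncard) :
    max L.card R.card ≤ failedZF G := by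
  have hLR : ∀ x, x ∈ L → x ∉ R := fun x hx hx2 =>
    (Finset.disjoint_left.mp hdisj) hx hx2
  have hRL : ∀ x, x ∈ R → x ∉ L := fun x hx hx2 =>
    (Finset.disjoint_left.mp hdisj) hx2 hx
  have hLQ : ∀ a b, G.Adj a b → a ∈ L → b ∈ R := by
    intro a b hab ha
    rcases hbip a b hab with ⟨_, h⟩ | ⟨h, _⟩
    · exact h
    · exact absurd h (hLR a ha)
  have hRQ : ∀ a b, G.Adj a b → a ∈ R → b ∈ L := by
    intro a b hab ha
    rcases hbip a b hab with ⟨h, _⟩ | ⟨_, h⟩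
    · exact absurd h (hRL a ha)
    · exact h
  rcases isEmpty_or_nonempty V with hV | hV
  · simp [Finset.card_eq_zero.mpr (Finset.eq_empty_of_isEmpty L),
      Finset.card_eq_zero.mpr (Finset.eq_empty_of_isEmpty R)]
  · obtain ⟨v⟩ := hV
    -- v has a neighbor
    have hne : (G.neighborSet v).Nonempty := by
      rw [← Set.ncard_pos (Set.toFinite _)]
      have := hδ v; omega
    obtain ⟨u, hu⟩ := hne
    have hadj : G.Adj v u := hu
    have hLne : L.Nonempty := by
      rcases hbip v u hadj with ⟨h, _⟩ | ⟨_, h⟩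
      · exact ⟨v, h⟩
      · exact ⟨u, h⟩
    have hRne : R.Nonempty := by
      rcases hbip v u hadj with ⟨_, h⟩ | ⟨h, _⟩
      · exact ⟨u, h⟩
      · exact ⟨v, h⟩
    exact max_le (failedZF_part G L R hLQ hLR hRne hδ)
      (failedZF_part G R L hRQ hRL hLne hδ)
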